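/- Let R be a commutative ring, m even, l ≥ 1. For i, j ∈ {1,…,l}, let A_{1i}, A_{2i}, B_{1j}, B_{2j} ∈ R^{m/2} denote the top and bottom halves of the i-th column of A ∈ R^{m×l} and the j-th column of B ∈ R^{m×l}, and set U_{ij} = A_{2i} + B_{1j}, V_{ij} = A_{1i} + B_{2j} ∈ R^{m/2}, and W_{ij} = A_{2i}ᵀA_{1i} + B_{1j}ᵀB_{2j} ∈ R. Then for all i, i', j, j': U_{i'j'} = U_{i'j} + U_{ij'} − U_{ij}, V_{i'j'} = V_{i'j} + V_{ij'} − V_{ij}, and W_{i'j'} = W_{i'j} + W_{ij'} − W_{ij}. Moreover U_{ij}ᵀV_{ij} − W_{ij} = (AᵀB)_{ij} for every i, j. -/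

import Mathlib

open Matrix

/-- Recursive dot-product scheme: with `U_{ij} = A_{2i} + B_{1j}`, `V_{ij} = A_{1i} + B_{2j}`,
`W_{ij} = A_{2i}ᵀA_{1i} + B_{1j}ᵀB_{2j}`, the cross-relations
`X_{i'j'} = X_{i'j} + X_{ij'} − X_{ij}` hold for `X ∈ {U, V, W}`, and
`U_{ij}ᵀV_{ij} − W_{ij} = (AᵀB)_{ij}`. -/
theorem stmt16 (R : Type) [CommRing R] (k l : ℕ)
    (A₁ A₂ B₁ B₂ : Matrix (Fin k) (Fin l) R) :
    let U : Fin l → Fin l → (Fin k → R) := fun i j r => A₂ r i + B₁ r j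
    let V : Fin l → Fin l → (Fin k → R) := fun i j r => A₁ r i + B₂ r j
    let W : Fin l → Fin l → R := fun i j =>
      dotProduct (fun r => A₂ r i) (fun r => A₁ r i)
        + dotProduct (fun r => B₁ r j) (fun r => B₂ r j)
    (∀ i i' j j' : Fin l, U i' j' = U i' j + U i j' - U i j) ∧
    (∀ i i' j j' : Fin l, V i' j' = V i' j + V i j' - V i j) ∧
    (∀ i i' j j' : Fin l, W i' j' = W i' j + W i j' - W i j) ∧
    (∀ i j : Fin l, dotProduct (U i j) (V i j) - W i j
      = ((Matrix.fromRows A₁ A₂)ᵀ * Matrix.fromRows B₁ B₂) i j) := by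
  refine ⟨fun i i' j j' => by funext r; simp; ring,
          fun i i' j j' => by funext r; simp; ring,
          fun i i' j j' => by simp [dotProduct]; ring,
          fun i j => ?_⟩
  simp only [Matrix.mul_apply, dotProduct, Matrix.transpose_apply,
    Fintype.sum_sum_type, Matrix.fromRows_apply_inl, Matrix.fromRows_apply_inr,
    ← Finset.sum_add_distrib, ← Finset.sum_sub_distrib]
  apply Finset.sum_congr rfl
  intro r _
  ring
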